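/- Let a > 0 and let b be differentiable with b'(s)/s → 0 as s → ∞. Define f(s) = exp(a s² + b(s)). Then for any fixed s₁ > 0, (s² · ∫_{s₁}^{s} (f(z)/z) dz) / f(s) → 1/(2a) as s → ∞. -/

import Mathlib

open Filter Real

/-- If `g` has nonnegative derivative `g'` on `[c, ∞)` then `g c ≤ g s` for `s ≥ c`. -/
lemma mono_aux (g g' : ℝ → ℝ) (c : ℝ)
    (hd : ∀ x, c ≤ x → HasDerivAt g (g' x) x) (hpos : ∀ x, c ≤ x → 0 ≤ g' x) :
    ∀ s, c ≤ s → g c ≤ g s := by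
  intro s hs
  have hmono : MonotoneOn g (Set.Ici c) := by
    apply monotoneOn_of_deriv_nonneg (convex_Ici c)
    · exact fun x hx => ((hd x hx).differentiableAt).continuousAt.continuousWithinAt
    · rw [interior_Ici]
      exact fun x hx => ((hd x (le_of_lt hx)).differentiableAt).differentiableWithinAt
    · rw [interior_Ici]
      intro x hx
      rw [(hd x (le_of_lt hx)).deriv]
      exact hpos x (le_of_lt hx)
  exact hmono Set.self_mem_Ici hs hs

set_option maxHeartbeats 1000000 in
theorem stmt_4 (a : ℝ) (ha : 0 < a) (b : ℝ → ℝ) (hb : Differentiable ℝ b)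
    (hb' : Tendsto (fun s => deriv b s / s) atTop (nhds 0))
    (f : ℝ → ℝ) (hf : ∀ s, f s = Real.exp (a * s ^ 2 + b s)) (s₁ : ℝ) (hs₁ : 0 < s₁) :
    Tendsto (fun s => (s ^ 2 * ∫ z in s₁..s, f z / z) / f s) atTop (nhds (1 / (2 * a))) := by
  have hfpos : ∀ s, 0 < f s := fun s => (hf s) ▸ Real.exp_pos _
  have hfc : Continuous f := by
    have : f = fun s => Real.exp (a * s ^ 2 + b s) := funext hf
    rw [this]
    exact Real.continuous_exp.comp ((continuous_const.mul (continuous_pow 2)).add hb.continuous)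
  -- derivative of f
  have hf_d : ∀ x : ℝ, HasDerivAt f (f x * (2 * a * x + deriv b x)) x := by
    intro x
    have h1 : HasDerivAt (fun s : ℝ => a * s ^ 2 + b s) (2 * a * x + deriv b x) x := by
      have h2 : HasDerivAt (fun s : ℝ => a * s ^ 2) (a * (2 * x ^ 1)) x :=
        (hasDerivAt_pow 2 x).const_mul a
      have := h2.add (hb x).hasDerivAt
      exact this.congr_deriv (by ring)
    have h3 := h1.exp
    have hfe : f = fun s => Real.exp (a * s ^ 2 + b s) := funext hf
    rw [hfe]
    convert h3 using 1
  -- the antiderivative-like function F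
  set F : ℝ → ℝ := fun z => f z / (2 * a * z ^ 2) with hFdef
  set eps : ℝ → ℝ := fun z => deriv b z / z / (2 * a) - 1 / (a * z ^ 2) with hepsdef
  have hF : ∀ x : ℝ, 0 < x → HasDerivAt F (f x / x * (1 + eps x)) x := by
    intro x hx
    have hden : HasDerivAt (fun z : ℝ => 2 * a * z ^ 2) (2 * a * (2 * x ^ 1)) x :=
      (hasDerivAt_pow 2 x).const_mul (2 * a)
    have hne : 2 * a * x ^ 2 ≠ 0 := by positivity
    have := (hf_d x).div hden hne
    refine HasDerivAt.congr_deriv this ?_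
    simp only [hepsdef]
    field_simp
    ring
  have hFpos : ∀ x : ℝ, 0 < x → 0 < F x := by
    intro x hx
    have := hfpos x
    positivity
  -- interval integrability of f z / z on positive intervals
  have hInt : ∀ u v : ℝ, 0 < u → 0 < v → IntervalIntegrable (fun z => f z / z) MeasureTheory.volume u v := by
    intro u v hu hv
    apply ContinuousOn.intervalIntegrable
    apply ContinuousOn.div hfc.continuousOn continuousOn_id
    intro z hz
    have : min u v ≤ z := hz.1
    have : 0 < z := lt_of_lt_of_le (lt_min hu hv) this
    exact ne_of_gt this
  -- derivative of the integral function
  have hIntDeriv : ∀ c x : ℝ, 0 < c → 0 < x →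
      HasDerivAt (fun u => ∫ z in c..u, f z / z) (f x / x) x := by
    intro c x hc hx
    apply intervalIntegral.integral_hasDerivAt_right (hInt c x hc hx)
    · exact ⟨Set.Ioi 0, Ioi_mem_nhds hx,
        ((hfc.continuousOn.div continuousOn_id (fun z hz => ne_of_gt hz)).aestronglyMeasurable
          measurableSet_Ioi)⟩
    · exact ContinuousAt.div hfc.continuousAt continuousAt_id (ne_of_gt hx)
  -- Step 1 : s^2 / f s → 0
  have hsf : Tendsto (fun s => s ^ 2 / f s) atTop (nhds 0) := by
    obtain ⟨M, hM⟩ : ∃ M : ℝ, ∀ z ≥ M, |deriv b z / z| ≤ a / 2 := by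
      have h := Metric.tendsto_nhds.mp hb' (a / 2) (by positivity)
      rw [eventually_atTop] at h
      obtain ⟨M, hM⟩ := h
      exact ⟨M, fun z hz => by
        have := hM z hz
        rw [Real.dist_eq, sub_zero] at this
        exact this.le⟩
    set z₂ : ℝ := max M 1 with hz₂def
    have hz₂1 : (1 : ℝ) ≤ z₂ := le_max_right _ _
    have hz₂0 : (0 : ℝ) < z₂ := lt_of_lt_of_le one_pos hz₂1
    -- b s + a/4 s^2 is monotone on [z₂, ∞)
    have hmono : ∀ s, z₂ ≤ s → b z₂ + a / 4 * z₂ ^ 2 ≤ b s + a / 4 * s ^ 2 := by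
      apply mono_aux (fun s => b s + a / 4 * s ^ 2) (fun s => deriv b s + a / 2 * s) z₂
      · intro x hx
        have h2 : HasDerivAt (fun s : ℝ => a / 4 * s ^ 2) (a / 4 * (2 * x ^ 1)) x :=
          (hasDerivAt_pow 2 x).const_mul (a / 4)
        have := (hb x).hasDerivAt.add h2
        exact this.congr_deriv (by ring)
      · intro x hx
        have hx0 : 0 < x := lt_of_lt_of_le hz₂0 hx
        have habs : |deriv b x / x| ≤ a / 2 := hM x (le_trans (le_max_left _ _) hx)
        have h1 : |deriv b x| ≤ a / 2 * x := by
          rw [abs_div, abs_of_pos hx0] at habs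
          calc |deriv b x| = |deriv b x| / x * x := by field_simp
          _ ≤ a / 2 * x := by
            apply mul_le_mul_of_nonneg_right habs hx0.le
        have := neg_abs_le (deriv b x)
        linarith
    set C : ℝ := b z₂ + a / 4 * z₂ ^ 2 with hCdef
    have hlow : ∀ s, z₂ ≤ s → Real.exp (3 * a / 4 * s ^ 2 + C) ≤ f s := by
      intro s hs
      rw [hf s]
      apply Real.exp_le_exp.mpr
      have := hmono s hs
      nlinarith
    -- the comparison function tends to zero
    have htend : Tendsto (fun s : ℝ => Real.exp (-C) * (4 / (3 * a) *
        ((3 * a / 4 * s ^ 2) ^ 1 * Real.exp (-(3 * a / 4 * s ^ 2))))) atTop (nhds 0) := by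
      have hcomp : Tendsto (fun s : ℝ => 3 * a / 4 * s ^ 2) atTop atTop := by
        apply Tendsto.const_mul_atTop (by positivity)
        exact tendsto_pow_atTop (by norm_num)
      have := (tendsto_pow_mul_exp_neg_atTop_nhds_zero 1).comp hcomp
      have h2 := this.const_mul (4 / (3 * a))
      have h3 := h2.const_mul (Real.exp (-C))
      simpa using h3
    apply squeeze_zero' (g := fun s : ℝ => Real.exp (-C) * (4 / (3 * a) *
        ((3 * a / 4 * s ^ 2) ^ 1 * Real.exp (-(3 * a / 4 * s ^ 2))))) _ _ htend
    · filter_upwards with s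
      exact div_nonneg (sq_nonneg s) (hfpos s).le
    · filter_upwards [eventually_ge_atTop z₂] with s hs
      have h1 := hlow s hs
      have h2 : s ^ 2 / f s ≤ s ^ 2 / Real.exp (3 * a / 4 * s ^ 2 + C) := by
        apply div_le_div_of_nonneg_left (sq_nonneg s) (Real.exp_pos _) h1
      calc s ^ 2 / f s ≤ s ^ 2 / Real.exp (3 * a / 4 * s ^ 2 + C) := h2
      _ = Real.exp (-C) * (4 / (3 * a) *
          ((3 * a / 4 * s ^ 2) ^ 1 * Real.exp (-(3 * a / 4 * s ^ 2)))) := by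
        rw [Real.exp_add, Real.exp_neg, Real.exp_neg]
        have h4 : Real.exp (3 * a / 4 * s ^ 2) ≠ 0 := Real.exp_ne_zero _
        have h5 : Real.exp C ≠ 0 := Real.exp_ne_zero _
        field_simp
    -- end of hsf
  -- Main argument
  rw [Metric.tendsto_nhds]
  intro ε hε
  set δ : ℝ := min (1 / 2) (a * ε / 2) with hδdef
  have hδ0 : 0 < δ := lt_min (by norm_num) (by positivity)
  have hδhalf : δ ≤ 1 / 2 := min_le_left _ _
  have hδε : δ ≤ a * ε / 2 := min_le_right _ _
  obtain ⟨M₁, hM₁⟩ : ∃ M : ℝ, ∀ z ≥ M, |deriv b z / z| ≤ a * δ := by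
    have h := Metric.tendsto_nhds.mp hb' (a * δ) (by positivity)
    rw [eventually_atTop] at h
    obtain ⟨M, hM⟩ := h
    exact ⟨M, fun z hz => by
      have := hM z hz
      rw [Real.dist_eq, sub_zero] at this
      exact this.le⟩
  set z₀ : ℝ := max (max M₁ s₁) (max 1 (2 / (a * δ))) with hz₀def
  have hz₀1 : (1 : ℝ) ≤ z₀ := le_trans (le_max_left _ _) (le_max_right _ _)
  have hz₀0 : (0 : ℝ) < z₀ := lt_of_lt_of_le one_pos hz₀1
  have hz₀s₁ : s₁ ≤ z₀ := le_trans (le_max_right _ _) (le_max_left _ _)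
  have hepsb : ∀ z, z₀ ≤ z → |eps z| ≤ δ := by
    intro z hz
    have hz1 : (1 : ℝ) ≤ z := le_trans hz₀1 hz
    have hz0 : (0 : ℝ) < z := lt_of_lt_of_le one_pos hz1
    have h1 : |deriv b z / z| ≤ a * δ := hM₁ z (le_trans (le_trans (le_max_left _ _) (le_max_left _ _)) hz)
    have h2 : 2 / (a * δ) ≤ z := le_trans (le_trans (le_max_right _ _) (le_max_right _ _)) hz
    have h3 : 2 / δ ≤ a * z ^ 2 := by
      have hz2 : 2 / (a * δ) ≤ z ^ 2 := by nlinarith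
      calc 2 / δ = a * (2 / (a * δ)) := by field_simp
      _ ≤ a * z ^ 2 := by nlinarith
    have h4 : 1 / (a * z ^ 2) ≤ δ / 2 := by
      rw [div_le_iff₀ (by positivity)]
      rw [div_le_iff₀ hδ0] at h3
      nlinarith
    have h5 : |deriv b z / z / (2 * a)| ≤ δ / 2 := by
      rw [abs_div, abs_of_pos (by positivity : (0:ℝ) < 2 * a)]
      rw [div_le_iff₀ (by positivity : (0:ℝ) < 2 * a)]
      calc |deriv b z / z| ≤ a * δ := h1
      _ ≤ δ / 2 * (2 * a) := by ring_nf; nlinarith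
    simp only [hepsdef]
    have h6 : 0 < 1 / (a * z ^ 2) := by positivity
    calc |deriv b z / z / (2 * a) - 1 / (a * z ^ 2)|
        ≤ |deriv b z / z / (2 * a)| + |1 / (a * z ^ 2)| := abs_sub _ _
    _ ≤ δ / 2 + δ / 2 := by
        apply add_le_add h5
        rw [abs_of_pos h6]; exact h4
    _ = δ := by ring
  -- constants
  set C₀ : ℝ := ∫ z in s₁..z₀, f z / z with hC₀def
  have hC₀ : 0 ≤ C₀ := by
    apply intervalIntegral.integral_nonneg hz₀s₁
    intro z hz
    have hz0 : 0 < z := lt_of_lt_of_le hs₁ hz.1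
    exact div_nonneg (hfpos z).le hz0.le
  have hFz₀ : 0 < F z₀ := hFpos z₀ hz₀0
  -- the two monotonicity bounds
  have hJ2 : ∀ s, z₀ ≤ s → F s - F z₀ ≤ (1 + δ) * ∫ z in z₀..s, f z / z := by
    intro s hs
    have := mono_aux (fun u => (1 + δ) * (∫ z in z₀..u, f z / z) - F u)
      (fun u => f u / u * (δ - eps u)) z₀ ?_ ?_ s hs
    · rw [intervalIntegral.integral_same] at this
      linarith
    · intro x hx
      have hx0 : 0 < x := lt_of_lt_of_le hz₀0 hx
      have h1 := ((hIntDeriv z₀ x hz₀0 hx0).const_mul (1 + δ)).sub (hF x hx0)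
      refine h1.congr_deriv ?_
      symm
      show f x / x * (δ - eps x) = (1 + δ) * (f x / x) - f x / x * (1 + eps x)
      ring
    · intro x hx
      have hx0 : 0 < x := lt_of_lt_of_le hz₀0 hx
      have h1 := hepsb x hx
      have h2 : eps x ≤ δ := le_of_abs_le h1
      have h3 : 0 < f x / x := by have := hfpos x; positivity
      show (0:ℝ) ≤ f x / x * (δ - eps x)
      exact mul_nonneg h3.le (by linarith)
  have hJ1 : ∀ s, z₀ ≤ s → (1 - δ) * ∫ z in z₀..s, f z / z ≤ F s - F z₀ := by
    intro s hs
    have := mono_aux (fun u => F u - (1 - δ) * (∫ z in z₀..u, f z / z))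
      (fun u => f u / u * (eps u + δ)) z₀ ?_ ?_ s hs
    · rw [intervalIntegral.integral_same] at this
      linarith
    · intro x hx
      have hx0 : 0 < x := lt_of_lt_of_le hz₀0 hx
      have h1 := (hF x hx0).sub ((hIntDeriv z₀ x hz₀0 hx0).const_mul (1 - δ))
      refine h1.congr_deriv ?_
      symm
      show f x / x * (eps x + δ) = f x / x * (1 + eps x) - (1 - δ) * (f x / x)
      ring
    · intro x hx
      have hx0 : 0 < x := lt_of_lt_of_le hz₀0 hx
      have h1 := hepsb x hx
      have h2 : -δ ≤ eps x := neg_le_of_abs_le h1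
      have h3 : 0 < f x / x := by have := hfpos x; positivity
      show (0:ℝ) ≤ f x / x * (eps x + δ)
      exact mul_nonneg h3.le (by linarith)
  -- eventual smallness of s^2 / f s
  have hr1 : (0:ℝ) < ε / (2 * (C₀ + 1)) := by positivity
  have hr2 : (0:ℝ) < ε / (2 * (F z₀ + 1)) := by positivity
  have hsmall : ∀ᶠ s in atTop, s ^ 2 / f s < min (ε / (2 * (C₀ + 1))) (ε / (2 * (F z₀ + 1))) := by
    have h := Metric.tendsto_nhds.mp hsf _ (lt_min hr1 hr2)
    filter_upwards [h] with s hs2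
    rw [Real.dist_eq, sub_zero] at hs2
    exact lt_of_le_of_lt (le_abs_self _) hs2
  filter_upwards [hsmall, eventually_ge_atTop z₀] with s hsm hsz₀
  have hs0 : 0 < s := lt_of_lt_of_le hz₀0 hsz₀
  have hfs : 0 < f s := hfpos s
  -- split the integral
  set J : ℝ := ∫ z in z₀..s, f z / z with hJdef
  have hsplit : (∫ z in s₁..s, f z / z) = C₀ + J :=
    (intervalIntegral.integral_add_adjacent_intervals (hInt s₁ z₀ hs₁ hz₀0) (hInt z₀ s hz₀0 hs0)).symm
  have hJ0 : 0 ≤ J := by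
    apply intervalIntegral.integral_nonneg hsz₀
    intro z hz
    have hz0 : 0 < z := lt_of_lt_of_le hz₀0 hz.1
    exact div_nonneg (hfpos z).le hz0.le
  set u : ℝ := s ^ 2 / f s with hudef
  have hu0 : 0 ≤ u := by positivity
  have hFsu : F s * u = 1 / (2 * a) := by
    have hfs' : f s ≠ 0 := ne_of_gt hfs
    have hs' : s ≠ 0 := ne_of_gt hs0
    show f s / (2 * a * s ^ 2) * (s ^ 2 / f s) = 1 / (2 * a)
    field_simp
  have hgoal : (s ^ 2 * ∫ z in s₁..s, f z / z) / f s = (C₀ + J) * u := by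
    rw [hsplit, hudef]
    ring
  rw [Real.dist_eq, hgoal]
  have hC₀u : C₀ * u < ε / 2 := by
    have h1 : u < ε / (2 * (C₀ + 1)) := lt_of_lt_of_le hsm (min_le_left _ _)
    calc C₀ * u ≤ (C₀ + 1) * u := by nlinarith
    _ < (C₀ + 1) * (ε / (2 * (C₀ + 1))) := by
        apply mul_lt_mul_of_pos_left h1 (by linarith)
    _ = ε / 2 := by field_simp
  have hFz₀u : F z₀ * u < ε / 2 := by
    have h1 : u < ε / (2 * (F z₀ + 1)) := lt_of_lt_of_le hsm (min_le_right _ _)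
    calc F z₀ * u ≤ (F z₀ + 1) * u := by nlinarith
    _ < (F z₀ + 1) * (ε / (2 * (F z₀ + 1))) := by
        apply mul_lt_mul_of_pos_left h1 (by linarith)
    _ = ε / 2 := by field_simp
  have hFz₀u0 : 0 ≤ F z₀ * u := mul_nonneg hFz₀.le hu0
  have h1 := hJ1 s hsz₀
  have h2 := hJ2 s hsz₀
  rw [← hJdef] at h1 h2
  have hδa : δ / a ≤ ε / 2 := by
    rw [div_le_iff₀ ha]
    nlinarith
  have hhalf : (0:ℝ) < 1 - δ := by linarith
  have h2a : (0:ℝ) < 1 / (2 * a) := by positivity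
  clear_value F eps δ z₀ C₀ J u
  rw [abs_sub_lt_iff]
  constructor
  · -- upper bound
    have h3 : (1 - δ) * (J * u) ≤ F s * u - F z₀ * u := by
      have := mul_le_mul_of_nonneg_right h1 hu0
      linarith [this]
    have h4 : (1 - δ) * (J * u) ≤ 1 / (2 * a) := by
      rw [← hFsu]; linarith
    have hXu : 0 ≤ J * u := mul_nonneg hJ0 hu0
    have hprod : 0 ≤ (1 / 2 - δ) * (J * u) := mul_nonneg (by linarith) hXu
    have hX2 : J * u ≤ 2 * (1 / (2 * a)) := by linarith
    have hKa : δ / a = 2 * δ * (1 / (2 * a)) := by field_simp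
    have hδX : δ * (J * u) ≤ δ * (2 * (1 / (2 * a))) := mul_le_mul_of_nonneg_left hX2 hδ0.le
    have h5 : J * u ≤ 1 / (2 * a) + δ / a := by linarith
    linarith
  · -- lower bound
    have h3 : F s * u - F z₀ * u ≤ (1 + δ) * (J * u) := by
      have := mul_le_mul_of_nonneg_right h2 hu0
      linarith [this]
    have h4 : 1 / (2 * a) - F z₀ * u ≤ (1 + δ) * (J * u) := by rw [← hFsu]; linarith
    have hXu : 0 ≤ J * u := mul_nonneg hJ0 hu0
    have h3' : (1 - δ) * (J * u) ≤ 1 / (2 * a) := by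
      have := mul_le_mul_of_nonneg_right h1 hu0
      rw [← hFsu]; linarith [this]
    have hprod : 0 ≤ (1 / 2 - δ) * (J * u) := mul_nonneg (by linarith) hXu
    have hX2 : J * u ≤ 2 * (1 / (2 * a)) := by linarith
    have hKa : δ / a = 2 * δ * (1 / (2 * a)) := by field_simp
    have hδX : δ * (J * u) ≤ δ * (2 * (1 / (2 * a))) := mul_le_mul_of_nonneg_left hX2 hδ0.le
    have h5 : 1 / (2 * a) - δ / a - F z₀ * u ≤ J * u := by linarith
    linarith [mul_nonneg hC₀ hu0]
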